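/- Let u₁, ..., u_n and v₁, ..., v_n be two bases of ℝⁿ consisting of unit vectors, each basis δ-almost orthonormal in the sense that |⟨u_i, u_j⟩| ≤ δ and |⟨v_i, v_j⟩| ≤ δ for i ≠ j, with δ ≤ 1/(4n). Let w, w′ be unit vectors. If |⟨u_i, w⟩ − ⟨u_i, w′⟩| ≤ ε for all i, then ‖w − w′‖ ≤ C·n·(ε + δ‖w − w′‖), hence ‖w − w′‖ ≤ C′·n·ε for universal constants C, C′ (assuming C·n·δ ≤ 1/2); consequently |⟨v_i, w⟩ − ⟨v_i, w′⟩| ≤ C′·n·ε for all i. -/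

import Mathlib

open scoped RealInnerProductSpace

open Finset in
lemma key_bound {n : ℕ} (u : Fin n → EuclideanSpace ℝ (Fin n)) (δ e : ℝ)
    (hδ : 0 ≤ δ) (hδn : (n : ℝ) * δ ≤ 1 / 4)
    (hu1 : ∀ i, ‖u i‖ = 1) (huδ : ∀ i j, i ≠ j → |⟪u i, u j⟫| ≤ δ)
    (c : Fin n → ℝ) (he : ∀ i, |⟪u i, ∑ j, c j • u j⟫| ≤ e) :
    ∑ i, |c i| ≤ (4 / 3) * n * e := by
  set S := ∑ i, |c i| with hS
  have hS0 : 0 ≤ S := Finset.sum_nonneg fun i _ => abs_nonneg _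
  have hci : ∀ i, |c i| ≤ e + δ * S := by
    intro i
    have h1 : ⟪u i, ∑ j, c j • u j⟫ = ∑ j, c j * ⟪u i, u j⟫ := by
      rw [inner_sum]; exact Finset.sum_congr rfl fun j _ => real_inner_smul_right _ _ _
    have hii : ⟪u i, u i⟫ = 1 := by
      have := real_inner_self_eq_norm_sq (u i)
      rw [hu1 i] at this; simpa using this
    have h2 : ∑ j, c j * ⟪u i, u j⟫
        = c i + ∑ j ∈ Finset.univ.erase i, c j * ⟪u i, u j⟫ := by
      rw [← Finset.add_sum_erase _ _ (Finset.mem_univ i), hii, mul_one]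
    have h3 : |∑ j ∈ Finset.univ.erase i, c j * ⟪u i, u j⟫| ≤ δ * S := by
      calc |∑ j ∈ Finset.univ.erase i, c j * ⟪u i, u j⟫|
          ≤ ∑ j ∈ Finset.univ.erase i, |c j * ⟪u i, u j⟫| :=
            Finset.abs_sum_le_sum_abs _ _
        _ ≤ ∑ j ∈ Finset.univ.erase i, |c j| * δ := by
            refine Finset.sum_le_sum fun j hj => ?_
            rw [abs_mul]
            exact mul_le_mul_of_nonneg_left
              (huδ i j (Ne.symm (Finset.ne_of_mem_erase hj))) (abs_nonneg _)
        _ ≤ ∑ j, |c j| * δ := by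
            refine Finset.sum_le_sum_of_subset_of_nonneg
              (Finset.erase_subset _ _) fun j _ _ =>
                mul_nonneg (abs_nonneg _) hδ
        _ = δ * S := by
            rw [hS, Finset.mul_sum]
            exact Finset.sum_congr rfl fun j _ => mul_comm _ _
    have h4 : c i = ⟪u i, ∑ j, c j • u j⟫ - ∑ j ∈ Finset.univ.erase i, c j * ⟪u i, u j⟫ := by
      rw [h1, h2]; ring
    calc |c i| ≤ |⟪u i, ∑ j, c j • u j⟫| + |∑ j ∈ Finset.univ.erase i, c j * ⟪u i, u j⟫| := by
          rw [h4]; exact abs_sub _ _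
      _ ≤ e + δ * S := add_le_add (he i) h3
  have hsum : S ≤ n * e + n * δ * S := by
    calc S ≤ ∑ _i : Fin n, (e + δ * S) := Finset.sum_le_sum fun i _ => hci i
      _ = n * e + n * δ * S := by
          rw [Finset.sum_const, Finset.card_univ, Fintype.card_fin]
          ring
  have h5 : (n : ℝ) * δ * S ≤ (1 / 4) * S := mul_le_mul_of_nonneg_right hδn hS0
  linarith

theorem stmt12 : ∃ C : ℝ, 0 < C ∧ ∀ (n : ℕ)
    (u v : Fin n → EuclideanSpace ℝ (Fin n)) (w w' : EuclideanSpace ℝ (Fin n))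
    (δ ε : ℝ),
    0 ≤ δ → δ ≤ 1 / (4 * n) → 0 ≤ ε →
    (∀ i, ‖u i‖ = 1) → (∀ i, ‖v i‖ = 1) →
    (∀ i j, i ≠ j → |⟪u i, u j⟫| ≤ δ) → (∀ i j, i ≠ j → |⟪v i, v j⟫| ≤ δ) →
    ‖w‖ = 1 → ‖w'‖ = 1 →
    (∀ i, |⟪u i, w⟫ - ⟪u i, w'⟫| ≤ ε) →
    ‖w - w'‖ ≤ C * n * ε ∧ ∀ i, |⟪v i, w⟫ - ⟪v i, w'⟫| ≤ C * n * ε := by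
  refine ⟨2, by norm_num, ?_⟩
  intro n u v w w' δ ε hδ0 hδn hε0 hu1 hv1 huδ hvδ hw hw' hε
  -- n = 0 is impossible since ‖w‖ = 1
  rcases Nat.eq_zero_or_pos n with hn | hn
  · subst hn
    have : w = 0 := Subsingleton.elim w 0
    rw [this] at hw; simp at hw
  have hn1 : (1 : ℝ) ≤ n := by exact_mod_cast hn
  have hnδ : (n : ℝ) * δ ≤ 1 / 4 := by
    have hnpos : (0 : ℝ) < n := by positivity
    rw [div_mul_eq_div_div] at hδn
    calc (n : ℝ) * δ ≤ (n : ℝ) * ((1 / 4) / n) :=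
          mul_le_mul_of_nonneg_left hδn (le_of_lt hnpos)
      _ = 1 / 4 := by field_simp
  -- linear independence of u
  have hli : LinearIndependent ℝ u := by
    rw [Fintype.linearIndependent_iff]
    intro c hc i
    have hz : ∑ i, |c i| ≤ (4 / 3) * n * 0 := by
      apply key_bound u δ 0 hδ0 hnδ hu1 huδ
      intro j; rw [hc]; simp
    rw [mul_zero] at hz
    have := Finset.sum_eq_zero_iff_of_nonneg (fun j _ => abs_nonneg (c j)) |>.mp
      (le_antisymm hz (Finset.sum_nonneg fun j _ => abs_nonneg _))
    exact abs_eq_zero.mp (this i (Finset.mem_univ i))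
  have hcard : Fintype.card (Fin n) = Module.finrank ℝ (EuclideanSpace ℝ (Fin n)) := by
    simp
  haveI : Nonempty (Fin n) := Fin.pos_iff_nonempty.mp hn
  let b := basisOfLinearIndependentOfCardEqFinrank hli hcard
  have hb : ∀ i, b i = u i := fun i => congrFun (coe_basisOfLinearIndependentOfCardEqFinrank hli hcard) i
  set d := w - w' with hd
  set c : Fin n → ℝ := fun i => b.repr d i with hcdef
  have hrepr : ∑ j, c j • u j = d := by
    conv_rhs => rw [← b.sum_repr d]
    exact Finset.sum_congr rfl fun j _ => by rw [hb]
  have hinner : ∀ i, |⟪u i, d⟫| ≤ ε := by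
    intro i
    have : ⟪u i, d⟫ = ⟪u i, w⟫ - ⟪u i, w'⟫ := by rw [hd, inner_sub_right]
    rw [this]; exact hε i
  have hS : ∑ i, |c i| ≤ (4 / 3) * n * ε := by
    apply key_bound u δ ε hδ0 hnδ hu1 huδ
    intro i; rw [hrepr]; exact hinner i
  have hdsq : ‖d‖ ^ 2 ≤ (4 / 3) * n * ε ^ 2 := by
    have : ‖d‖ ^ 2 = ⟪d, d⟫ := (real_inner_self_eq_norm_sq d).symm
    rw [this]
    calc ⟪d, d⟫ = ⟪∑ j, c j • u j, d⟫ := by rw [hrepr]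
      _ = ∑ j, c j * ⟪u j, d⟫ := by
          rw [sum_inner]
          exact Finset.sum_congr rfl fun j _ => real_inner_smul_left _ _ _
      _ ≤ ∑ j, |c j| * ε := by
          refine Finset.sum_le_sum fun j _ => ?_
          calc c j * ⟪u j, d⟫ ≤ |c j * ⟪u j, d⟫| := le_abs_self _
            _ = |c j| * |⟪u j, d⟫| := abs_mul _ _
            _ ≤ |c j| * ε := mul_le_mul_of_nonneg_left (hinner j) (abs_nonneg _)
      _ = (∑ j, |c j|) * ε := by rw [Finset.sum_mul]
      _ ≤ ((4 / 3) * n * ε) * ε := mul_le_mul_of_nonneg_right hS hε0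
      _ = (4 / 3) * n * ε ^ 2 := by ring
  have hdnorm : ‖d‖ ≤ 2 * n * ε := by
    nlinarith [norm_nonneg d, sq_nonneg (‖d‖ - 2 * n * ε), sq_nonneg ε,
      mul_nonneg (mul_nonneg (by norm_num : (0:ℝ) ≤ 2) (le_trans zero_le_one hn1)) hε0]
  refine ⟨hdnorm, fun i => ?_⟩
  have : ⟪v i, w⟫ - ⟪v i, w'⟫ = ⟪v i, d⟫ := by rw [hd, inner_sub_right]
  rw [this]
  calc |⟪v i, d⟫| ≤ ‖v i‖ * ‖d‖ := abs_real_inner_le_norm _ _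
    _ = ‖d‖ := by rw [hv1 i, one_mul]
    _ ≤ 2 * n * ε := hdnorm
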